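/- arXiv:2104.07159 — 2 statements merged into one kernel-verified Lean document; each statement's English description precedes it below -/
import Mathlib

section
/- Let K = (G, M, I) be a finite formal context and S = [H, N] a subcontext of K that is isomorphic to a contranominal scale N^c(k) (i.e., S is a reduced Boolean subcontext of dimension k). Then the image of the concept lattice of S under the map φ₁(A,B) = (A'', A') is a sub-join-semilattice of B(K), and the image under φ₂(A,B) = (B', B'') is a sub-meet-semilattice of B(K). -/
variable {G M : Type*} [Fintype G] [Fintype M]

/-- Attribute derivation A' of an object set A w.r.t. incidence I. -/
def ctxExtDeriv (I : Set (G × M)) (A : Set G) : Set M := {m | ∀ g ∈ A, (g, m) ∈ I}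

/-- Object derivation B' of an attribute set B w.r.t. incidence I. -/
def intDeriv (I : Set (G × M)) (B : Set M) : Set G := {g | ∀ m ∈ B, (g, m) ∈ I}

/-- (A,B) is a formal concept of (G,M,I). -/
def IsConcept (I : Set (G × M)) (A : Set G) (B : Set M) : Prop :=
  ctxExtDeriv I A = B ∧ intDeriv I B = A

/-- Derivation of an object set inside the (sub)context (H,N,J). -/
def subExtDeriv (N : Set M) (J : Set (G × M)) (A : Set G) : Set M :=
  {n ∈ N | ∀ g ∈ A, (g, n) ∈ J}

/-- Derivation of an attribute set inside the (sub)context (H,N,J). -/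
def subIntDeriv (H : Set G) (J : Set (G × M)) (B : Set M) : Set G :=
  {h ∈ H | ∀ n ∈ B, (h, n) ∈ J}

/-- (A,B) is a formal concept of the context (H,N,J). -/
def IsSubConcept (H : Set G) (N : Set M) (J : Set (G × M)) (A : Set G) (B : Set M) : Prop :=
  A ⊆ H ∧ B ⊆ N ∧ subExtDeriv N J A = B ∧ subIntDeriv H J B = A

/-- (H,N,J) is a closed-subcontext of (G,M,I). -/
def IsClosedSubcontext (I : Set (G × M)) (H : Set G) (N : Set M) (J : Set (G × M)) : Prop :=
  J ⊆ I ∩ H ×ˢ N ∧ ∀ A B, IsSubConcept H N J A B → IsConcept I A B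

/-- Binary join in the concept lattice of (G,M,I). -/
def conceptJoin (I : Set (G × M)) (c d : Set G × Set M) : Set G × Set M :=
  (intDeriv I (c.2 ∩ d.2), c.2 ∩ d.2)

/-- Binary meet in the concept lattice of (G,M,I). -/
def conceptMeet (I : Set (G × M)) (c d : Set G × Set M) : Set G × Set M :=
  (c.1 ∩ d.1, ctxExtDeriv I (c.1 ∩ d.1))

/-- S is a sublattice of the concept lattice of (G,M,I). -/
def IsConceptSublattice (I : Set (G × M)) (S : Set (Set G × Set M)) : Prop :=
  S.Nonempty ∧ (∀ c ∈ S, IsConcept I c.1 c.2) ∧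
    ∀ c ∈ S, ∀ d ∈ S, conceptJoin I c d ∈ S ∧ conceptMeet I c d ∈ S

/-- Image of the concept set of the subcontext [H,N] under φ₁(A,B)=(A'',A'). -/
def phi1Image (I : Set (G × M)) (H : Set G) (N : Set M) : Set (Set G × Set M) :=
  {c | ∃ A B, IsSubConcept H N (I ∩ H ×ˢ N) A B ∧
      c = (intDeriv I (ctxExtDeriv I A), ctxExtDeriv I A)}

/-- Image of the concept set of the subcontext [H,N] under φ₂(A,B)=(B',B''). -/
def phi2Image (I : Set (G × M)) (H : Set G) (N : Set M) : Set (Set G × Set M) :=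
  {c | ∃ A B, IsSubConcept H N (I ∩ H ×ˢ N) A B ∧
      c = (intDeriv I B, ctxExtDeriv I (intDeriv I B))}

/-- [H,N] is (isomorphic to) a contranominal scale of dimension k in (G,M,I). -/
def IsContranominal (I : Set (G × M)) (k : ℕ) (H : Set G) (N : Set M) : Prop :=
  ∃ f : Fin k → G, ∃ g : Fin k → M, Function.Injective f ∧ Function.Injective g ∧
    H = Set.range f ∧ N = Set.range g ∧ ∀ i j, (f i, g j) ∈ I ↔ i ≠ j

/-- O is a minimal object generator of the concept with extent A. -/
def IsMinObjGen (I : Set (G × M)) (A : Set G) (O : Set G) : Prop :=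
  intDeriv I (ctxExtDeriv I O) = A ∧ ∀ P ⊂ O, intDeriv I (ctxExtDeriv I P) ≠ A

/-- Q is a minimal attribute generator of the concept with intent B. -/
def IsMinAttGen (I : Set (G × M)) (B : Set M) (Q : Set M) : Prop :=
  ctxExtDeriv I (intDeriv I Q) = B ∧ ∀ P ⊂ Q, ctxExtDeriv I (intDeriv I P) ≠ B

/-- Union of all minimal object generators of the atoms of a Boolean suborder
given by an order embedding f of the powerset of Fin k. -/
def genH (I : Set (G × M)) {k : ℕ} (f : Set (Fin k) → Set G × Set M) : Set G :=
  {g | ∃ i : Fin k, ∃ O : Set G, IsMinObjGen I (f {i}).1 O ∧ g ∈ O}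

/-- Union of all minimal attribute generators of the coatoms of a Boolean suborder. -/
def genN (I : Set (G × M)) {k : ℕ} (f : Set (Fin k) → Set G × Set M) : Set M :=
  {m | ∃ i : Fin k, ∃ Q : Set M, IsMinAttGen I (f {i}ᶜ).2 Q ∧ m ∈ Q}


lemma extDeriv_union (I : Set (G × M)) (A₁ A₂ : Set G) :
    ctxExtDeriv I (A₁ ∪ A₂) = ctxExtDeriv I A₁ ∩ ctxExtDeriv I A₂ := by
  ext m; simp only [ctxExtDeriv, Set.mem_setOf_eq, Set.mem_inter_iff, Set.mem_union]
  constructor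
  · intro h; exact ⟨fun g hg => h g (Or.inl hg), fun g hg => h g (Or.inr hg)⟩
  · rintro ⟨h1, h2⟩ g (hg | hg); exacts [h1 g hg, h2 g hg]

lemma intDeriv_union (I : Set (G × M)) (B₁ B₂ : Set M) :
    intDeriv I (B₁ ∪ B₂) = intDeriv I B₁ ∩ intDeriv I B₂ := by
  ext g; simp only [intDeriv, Set.mem_setOf_eq, Set.mem_inter_iff, Set.mem_union]
  constructor
  · intro h; exact ⟨fun m hm => h m (Or.inl hm), fun m hm => h m (Or.inr hm)⟩
  · rintro ⟨h1, h2⟩ m (hm | hm); exacts [h1 m hm, h2 m hm]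

lemma contr_extent {I : Set (G × M)} {k : ℕ} {H : Set G} {N : Set M}
    (hc : IsContranominal I k H N) {A : Set G} (hA : A ⊆ H) :
    IsSubConcept H N (I ∩ H ×ˢ N) A (subExtDeriv N (I ∩ H ×ˢ N) A) := by
  obtain ⟨f, g, hf, hg, rfl, rfl, hI⟩ := hc
  refine ⟨hA, fun n hn => hn.1, rfl, ?_⟩
  ext x
  simp only [subIntDeriv, Set.mem_setOf_eq]
  constructor
  · rintro ⟨⟨i, rfl⟩, hx⟩
    by_contra hfiA
    have hgi : g i ∈ subExtDeriv (Set.range g) (I ∩ Set.range f ×ˢ Set.range g) A := by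
      refine ⟨⟨i, rfl⟩, fun y hy => ?_⟩
      obtain ⟨j, rfl⟩ := hA hy
      have hji : j ≠ i := fun hji => hfiA (hji ▸ hy)
      exact ⟨(hI j i).mpr hji, ⟨j, rfl⟩, ⟨i, rfl⟩⟩
    have := (hx (g i) hgi).1
    exact (hI i i).mp this rfl
  · intro hx
    refine ⟨hA hx, fun n hn => (hn.2 x hx)⟩

lemma contr_intent {I : Set (G × M)} {k : ℕ} {H : Set G} {N : Set M}
    (hc : IsContranominal I k H N) {B : Set M} (hB : B ⊆ N) :
    IsSubConcept H N (I ∩ H ×ˢ N) (subIntDeriv H (I ∩ H ×ˢ N) B) B := by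
  obtain ⟨f, g, hf, hg, rfl, rfl, hI⟩ := hc
  refine ⟨fun x hx => hx.1, hB, ?_, rfl⟩
  ext n
  simp only [subExtDeriv, Set.mem_setOf_eq]
  constructor
  · rintro ⟨⟨i, rfl⟩, hn⟩
    by_contra hgiB
    have hfi : f i ∈ subIntDeriv (Set.range f) (I ∩ Set.range f ×ˢ Set.range g) B := by
      refine ⟨⟨i, rfl⟩, fun y hy => ?_⟩
      obtain ⟨j, rfl⟩ := hB hy
      have hji : i ≠ j := fun hji => hgiB (hji ▸ hy)
      exact ⟨(hI i j).mpr hji, ⟨i, rfl⟩, ⟨j, rfl⟩⟩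
    have := (hn (f i) hfi).1
    exact (hI i i).mp this rfl
  · intro hn
    refine ⟨hB hn, fun x hx => (hx.2 n hn)⟩

theorem stmt10 (I : Set (G × M)) (k : ℕ) (H : Set G) (N : Set M)
    (h : IsContranominal I k H N) :
    (∀ c ∈ phi1Image I H N, ∀ d ∈ phi1Image I H N, conceptJoin I c d ∈ phi1Image I H N) ∧
    (∀ c ∈ phi2Image I H N, ∀ d ∈ phi2Image I H N, conceptMeet I c d ∈ phi2Image I H N) := by
  constructor
  · rintro c ⟨A₁, B₁, hc1, rfl⟩ d ⟨A₂, B₂, hc2, rfl⟩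
    refine ⟨A₁ ∪ A₂, subExtDeriv N (I ∩ H ×ˢ N) (A₁ ∪ A₂),
      contr_extent h (Set.union_subset hc1.1 hc2.1), ?_⟩
    simp only [conceptJoin]
    rw [← extDeriv_union]
  · rintro c ⟨A₁, B₁, hc1, rfl⟩ d ⟨A₂, B₂, hc2, rfl⟩
    refine ⟨subIntDeriv H (I ∩ H ×ˢ N) (B₁ ∪ B₂), B₁ ∪ B₂,
      contr_intent h (Set.union_subset hc1.2.1 hc2.2.1), ?_⟩
    simp only [conceptMeet]
    rw [← intDeriv_union]
end

section
/- Let K = (G, M, I) be a finite formal context and S ≤ K a subcontext. Then the images φ₁(S) and φ₂(S) (the sets of images of all concepts of S under φ₁(A,B) = (A'',A') resp. φ₂(A,B) = (B',B'')) are equal if and only if for every concept (A,B) of S one has (A' \ B) × (B' \ A) ⊆ I. -/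
variable {G M : Type*} [Fintype G] [Fintype M]

theorem stmt12 (I : Set (G × M)) (H : Set G) (N : Set M) :
    (∀ A B, IsSubConcept H N (I ∩ H ×ˢ N) A B →
        ((intDeriv I (ctxExtDeriv I A), ctxExtDeriv I A) : Set G × Set M) =
          (intDeriv I B, ctxExtDeriv I (intDeriv I B))) ↔
    (∀ A B, IsSubConcept H N (I ∩ H ×ˢ N) A B →
        (intDeriv I B \ A) ×ˢ (ctxExtDeriv I A \ B) ⊆ I) := by
  constructor
  · intro h A B hAB p hp
    obtain ⟨hg, hm⟩ := Set.mem_prod.1 hp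
    have heq := h A B hAB
    have h1 : intDeriv I (ctxExtDeriv I A) = intDeriv I B := congrArg Prod.fst heq
    have : p.1 ∈ intDeriv I (ctxExtDeriv I A) := h1 ▸ hg.1
    exact this p.2 hm.1
  · intro h A B hAB
    obtain ⟨hAH, hBN, hext, hint⟩ := hAB
    have hBA' : B ⊆ ctxExtDeriv I A := by
      intro m hm
      rw [← hext] at hm
      exact fun g hg => (hm.2 g hg).1
    have hAB' : A ⊆ intDeriv I B := by
      intro g hg
      rw [← hint] at hg
      exact fun m hm => (hg.2 m hm).1
    have hrect := h A B ⟨hAH, hBN, hext, hint⟩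
    have e1 : intDeriv I (ctxExtDeriv I A) = intDeriv I B := by
      apply Set.Subset.antisymm
      · intro g hg m hm
        exact hg m (hBA' hm)
      · intro g hg m hm
        by_cases hmB : m ∈ B
        · exact hg m hmB
        · by_cases hgA : g ∈ A
          · exact hm g hgA
          · exact hrect (Set.mem_prod.2 ⟨⟨hg, hgA⟩, ⟨hm, hmB⟩⟩)
    have e2 : ctxExtDeriv I A = ctxExtDeriv I (intDeriv I B) := by
      apply Set.Subset.antisymm
      · intro m hm g hg
        by_cases hgA : g ∈ A
        · exact hm g hgA
        · by_cases hmB : m ∈ B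
          · exact hg m hmB
          · exact hrect (Set.mem_prod.2 ⟨⟨hg, hgA⟩, ⟨hm, hmB⟩⟩)
      · intro m hm g hg
        exact hm g (hAB' hg)
    exact Prod.ext e1 e2
end
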